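/- If S₁ and S₂ are nonnegative bounded self-adjoint operators on a Hilbert space H and K is a closed subspace, then the shorted operator of the sum dominates the sum of the shorted operators: (S₁ + S₂)_K ≥ (S₁)_K + (S₂)_K. -/

import Mathlib

open ContinuousLinearMap

variable {H : Type*} [NormedAddCommGroup H] [InnerProductSpace ℂ H] [CompleteSpace H]

/-- `W` is the Kreĭn shorted operator of `S` with respect to the closed subspace `K`. -/
def IsShortedOp (S W : H →L[ℂ] H) (K : Submodule ℂ H) : Prop :=
  IsSelfAdjoint W ∧
    ∀ f : H, (inner ℂ (W f) f : ℂ).re = ⨅ φ : Kᗮ, (inner ℂ (S (f + φ)) (f + φ) : ℂ).re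

/-- The shorted operator of a sum dominates the sum of the shorted
operators: `(S₁ + S₂)_K ≥ (S₁)_K + (S₂)_K`. -/
theorem shorted_superadditive (S₁ S₂ : H →L[ℂ] H)
    (hS₁ : S₁.IsPositive) (hS₂ : S₂.IsPositive)
    (K : Submodule ℂ H) (hK : IsClosed (K : Set H))
    (W₁ W₂ W : H →L[ℂ] H)
    (hW₁ : IsShortedOp S₁ W₁ K) (hW₂ : IsShortedOp S₂ W₂ K)
    (hW : IsShortedOp (S₁ + S₂) W K) :
    (W - (W₁ + W₂)).IsPositive := by
  obtain ⟨hW₁sa, hW₁f⟩ := hW₁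
  obtain ⟨hW₂sa, hW₂f⟩ := hW₂
  obtain ⟨hWsa, hWf⟩ := hW
  refine ⟨(hWsa.sub (hW₁sa.add hW₂sa)).isSymmetric, ?_⟩
  intro f
  rw [reApplyInnerSelf_apply]
  simp only [sub_apply, add_apply, inner_sub_left, inner_add_left, map_sub, map_add]
  simp only [RCLike.re_to_complex]
  rw [sub_nonneg, hWf f, hW₁f f, hW₂f f]
  have hb₁ : BddBelow (Set.range fun φ : Kᗮ => (inner ℂ (S₁ (f + φ)) (f + φ) : ℂ).re) := by
    refine ⟨0, ?_⟩; rintro x ⟨φ, rfl⟩; exact hS₁.2 _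
  have hb₂ : BddBelow (Set.range fun φ : Kᗮ => (inner ℂ (S₂ (f + φ)) (f + φ) : ℂ).re) := by
    refine ⟨0, ?_⟩; rintro x ⟨φ, rfl⟩; exact hS₂.2 _
  refine le_ciInf fun φ => ?_
  have h1 : (⨅ φ : Kᗮ, (inner ℂ (S₁ (f + φ)) (f + φ) : ℂ).re)
      ≤ (inner ℂ (S₁ (f + φ)) (f + φ) : ℂ).re := ciInf_le hb₁ φ
  have h2 : (⨅ φ : Kᗮ, (inner ℂ (S₂ (f + φ)) (f + φ) : ℂ).re)
      ≤ (inner ℂ (S₂ (f + φ)) (f + φ) : ℂ).re := ciInf_le hb₂ φ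
  have heq : (inner ℂ ((S₁ + S₂) (f + φ)) (f + φ) : ℂ).re
      = (inner ℂ (S₁ (f + φ)) (f + φ) : ℂ).re + (inner ℂ (S₂ (f + φ)) (f + φ) : ℂ).re := by
    simp [inner_add_left]; ring
  rw [heq]
  exact add_le_add h1 h2
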